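/- In Non-Disconnecting Arc-Kayles on the cycle C_n (n ≥ 3), the first move transforms the game into the game on the path P_{n-2}, and the first player wins if and only if ⌊n/2⌋ is odd. -/
import Mathlib


open SimpleGraph Finset

variable {V : Type*} [Fintype V] [DecidableEq V]

/-- A legal move in Non-Disconnecting Arc-Kayles on position `s`. -/
def NDLegal (G : SimpleGraph V) (s : Finset V) (u v : V) : Prop :=
  u ∈ s ∧ v ∈ s ∧ G.Adj u v ∧
    (s \ {u, v} = ∅ ∨ (G.induce ((s \ {u, v} : Finset V) : Set V)).Connected)

/-- Fuel-indexed winning predicate (normal play). -/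
def NDWinAux (G : SimpleGraph V) : ℕ → Finset V → Prop
  | 0, _ => False
  | n + 1, s => ∃ u v, NDLegal G s u v ∧ ¬ NDWinAux G n (s \ {u, v})

/-- The player to move wins Non-Disconnecting Arc-Kayles from position `s`. -/
def NDFirstWins (G : SimpleGraph V) (s : Finset V) : Prop :=
  NDWinAux G s.card s

section Helpers

/-- Invariants propagate along reachability. -/
lemma reach_invariant {α : Type*} {G : SimpleGraph α} (P : α → Prop)
    (hP : ∀ a b, G.Adj a b → P a → P b) {x y : α} (h : G.Reachable x y) (hx : P x) : P y := by
  obtain ⟨w⟩ := h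
  induction w with
  | nil => exact hx
  | cons h p ih => exact ih (hP _ _ h hx)

lemma fin_sub_val_one {n : ℕ} {x y : Fin n} (hx : 1 ≤ x.val) (hy : 1 ≤ y.val) :
    (x - y).val = 1 ↔ x.val = y.val + 1 := by
  have hxn := x.is_lt
  have hyn := y.is_lt
  rw [Fin.sub_def]
  simp only
  rcases le_or_gt y.val x.val with h | h
  · have e : n - y.val + x.val = n + (x.val - y.val) := by omega
    rw [e, Nat.add_mod_left, Nat.mod_eq_of_lt (by omega)]
    omega
  · rw [Nat.mod_eq_of_lt (by omega)]
    omega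

/-- An adjacency-preserving bijection onto a finset gives an iso of the induced graph. -/
lemma induceIsoFull {W W' : Type*} (G : SimpleGraph W) (H : SimpleGraph W')
    (s : Finset W) [DecidableEq W] (g : W' → W)
    (hmem : ∀ b, g b ∈ s) (hinj : Function.Injective g) (hsurj : ∀ a ∈ s, ∃ b, g b = a)
    (hadj : ∀ b b', H.Adj b b' ↔ G.Adj (g b) (g b')) :
    Nonempty (G.induce (s : Set W) ≃g H) := by
  have hbij : Function.Bijective (fun b : W' => (⟨g b, Finset.mem_coe.mpr (hmem b)⟩ :
      (s : Set W))) := by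
    constructor
    · intro a b hab
      exact hinj (congrArg Subtype.val hab)
    · rintro ⟨a, ha⟩
      obtain ⟨b, rfl⟩ := hsurj a (Finset.mem_coe.mp ha)
      exact ⟨b, rfl⟩
  refine ⟨(RelIso.mk (Equiv.ofBijective _ hbij) ?_).symm⟩
  intro a b
  simp only [Equiv.ofBijective_apply, comap_adj]
  exact (hadj a b).symm

/-- A pairwise version between two induced graphs. -/
lemma induceIsoPair {W W' : Type*} (G : SimpleGraph W) (H : SimpleGraph W')
    (s : Finset W) (t : Finset W') (g : W' → W)
    (hmem : ∀ b ∈ t, g b ∈ s)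
    (hinj : ∀ a ∈ t, ∀ b ∈ t, g a = g b → a = b)
    (hsurj : ∀ a ∈ s, ∃ b ∈ t, g b = a)
    (hadj : ∀ b ∈ t, ∀ b' ∈ t, (H.Adj b b' ↔ G.Adj (g b) (g b'))) :
    Nonempty (H.induce (t : Set W') ≃g G.induce (s : Set W)) := by
  have hbij : Function.Bijective (fun b : (t : Set W') =>
      (⟨g b, Finset.mem_coe.mpr (hmem b (Finset.mem_coe.mp b.2))⟩ : (s : Set W))) := by
    constructor
    · rintro ⟨a, ha⟩ ⟨b, hb⟩ hab
      exact Subtype.ext (hinj a (Finset.mem_coe.mp ha) b (Finset.mem_coe.mp hb)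
        (congrArg Subtype.val hab))
    · rintro ⟨a, ha⟩
      obtain ⟨b, hb, rfl⟩ := hsurj a (Finset.mem_coe.mp ha)
      exact ⟨⟨b, Finset.mem_coe.mpr hb⟩, rfl⟩
  refine ⟨RelIso.mk (Equiv.ofBijective _ hbij) ?_⟩
  rintro ⟨a, ha⟩ ⟨b, hb⟩
  simp only [Equiv.ofBijective_apply, comap_adj]
  exact (hadj a (Finset.mem_coe.mp ha) b (Finset.mem_coe.mp hb)).symm

end Helpers

section Transfer

/-- `NDWinAux` only depends on the isomorphism type of the induced graph on the position. -/
lemma NDWinAux_transfer {W W' : Type*} [Fintype W] [DecidableEq W] [Fintype W'] [DecidableEq W']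
    (G : SimpleGraph W) (H : SimpleGraph W') :
    ∀ (m : ℕ) (s : Finset W) (t : Finset W') (g : W' → W),
    (∀ b ∈ t, g b ∈ s) →
    (∀ a ∈ t, ∀ b ∈ t, g a = g b → a = b) →
    (∀ a ∈ s, ∃ b ∈ t, g b = a) →
    (∀ b ∈ t, ∀ b' ∈ t, (H.Adj b b' ↔ G.Adj (g b) (g b'))) →
    (NDWinAux H m t ↔ NDWinAux G m s) := by
  intro m
  induction m with
  | zero => intro s t g _ _ _ _; exact Iff.rfl
  | succ m ih =>
    intro s t g hmem hinj hsurj hadj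
    have key : ∀ u ∈ t, ∀ v ∈ t,
        ((NDLegal H t u v ∧ ¬ NDWinAux H m (t \ {u, v})) ↔
         (NDLegal G s (g u) (g v) ∧ ¬ NDWinAux G m (s \ {g u, g v}))) := by
      intro u hu v hv
      have hmem' : ∀ b ∈ t \ {u, v}, g b ∈ s \ {g u, g v} := by
        intro b hb
        simp only [Finset.mem_sdiff, Finset.mem_insert, Finset.mem_singleton] at hb ⊢
        refine ⟨hmem b hb.1, ?_⟩
        rintro (h | h)
        · exact hb.2 (Or.inl (hinj b hb.1 u hu h))
        · exact hb.2 (Or.inr (hinj b hb.1 v hv h))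
      have hinj' : ∀ a ∈ t \ {u, v}, ∀ b ∈ t \ {u, v}, g a = g b → a = b := by
        intro a ha b hb h
        exact hinj a (Finset.mem_sdiff.mp ha).1 b (Finset.mem_sdiff.mp hb).1 h
      have hsurj' : ∀ a ∈ s \ {g u, g v}, ∃ b ∈ t \ {u, v}, g b = a := by
        intro a ha
        simp only [Finset.mem_sdiff, Finset.mem_insert, Finset.mem_singleton] at ha
        obtain ⟨b, hb, rfl⟩ := hsurj a ha.1
        refine ⟨b, ?_, rfl⟩
        simp only [Finset.mem_sdiff, Finset.mem_insert, Finset.mem_singleton]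
        refine ⟨hb, ?_⟩
        rintro (rfl | rfl)
        · exact ha.2 (Or.inl rfl)
        · exact ha.2 (Or.inr rfl)
      have hadj' : ∀ b ∈ t \ {u, v}, ∀ b' ∈ t \ {u, v},
          (H.Adj b b' ↔ G.Adj (g b) (g b')) := by
        intro b hb b' hb'
        exact hadj b (Finset.mem_sdiff.mp hb).1 b' (Finset.mem_sdiff.mp hb').1
      have hempty : t \ {u, v} = ∅ ↔ s \ {g u, g v} = ∅ := by
        constructor
        · intro h
          rw [Finset.eq_empty_iff_forall_notMem]
          intro a ha
          obtain ⟨b, hb, rfl⟩ := hsurj' a ha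
          rw [h] at hb
          exact absurd hb (Finset.notMem_empty b)
        · intro h
          rw [Finset.eq_empty_iff_forall_notMem]
          intro b hb
          have := hmem' b hb
          rw [h] at this
          exact absurd this (Finset.notMem_empty _)
      have hconn : (H.induce ((t \ {u, v} : Finset W') : Set W')).Connected ↔
          (G.induce ((s \ {g u, g v} : Finset W) : Set W)).Connected := by
        obtain ⟨e⟩ := induceIsoPair G H (s \ {g u, g v}) (t \ {u, v}) g hmem' hinj' hsurj' hadj'
        exact e.connected_iff
      have hwin : NDWinAux H m (t \ {u, v}) ↔ NDWinAux G m (s \ {g u, g v}) :=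
        ih _ _ g hmem' hinj' hsurj' hadj'
      constructor
      · rintro ⟨⟨_, _, hAdj, hC⟩, hW⟩
        refine ⟨⟨hmem u hu, hmem v hv, (hadj u hu v hv).mp hAdj, ?_⟩, fun h => hW (hwin.mpr h)⟩
        rcases hC with h | h
        · exact Or.inl (hempty.mp h)
        · exact Or.inr (hconn.mp h)
      · rintro ⟨⟨_, _, hAdj, hC⟩, hW⟩
        refine ⟨⟨hu, hv, (hadj u hu v hv).mpr hAdj, ?_⟩, fun h => hW (hwin.mp h)⟩
        rcases hC with h | h
        · exact Or.inl (hempty.mpr h)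
        · exact Or.inr (hconn.mpr h)
    constructor
    · rintro ⟨u, v, hleg, hW⟩
      have hu := hleg.1
      have hv := hleg.2.1
      obtain ⟨h1, h2⟩ := (key u hu v hv).mp ⟨hleg, hW⟩
      exact ⟨g u, g v, h1, h2⟩
    · rintro ⟨u', v', hleg, hW⟩
      obtain ⟨u, hu, rfl⟩ := hsurj u' hleg.1
      obtain ⟨v, hv, rfl⟩ := hsurj v' hleg.2.1
      obtain ⟨h1, h2⟩ := (key u hu v hv).mpr ⟨hleg, hW⟩
      exact ⟨u, v, h1, h2⟩

/-- The fuel does not matter once it is at least the size of the position. -/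
lemma NDWinAux_fuel (G : SimpleGraph V) :
    ∀ (c : ℕ) (s : Finset V), s.card = c → ∀ m k, c ≤ m → c ≤ k →
      (NDWinAux G m s ↔ NDWinAux G k s) := by
  intro c
  induction c using Nat.strong_induction_on with
  | _ c IH =>
    have aux : ∀ (s : Finset V), s.card = c → ∀ m, c ≤ m →
        (NDWinAux G m s ↔ NDWinAux G c s) := by
      intro s hs m hm
      match m, c, hm with
      | 0, 0, _ => exact Iff.rfl
      | m + 1, 0, _ =>
        rw [Finset.card_eq_zero] at hs
        subst hs
        simp only [NDWinAux]
        constructor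
        · rintro ⟨u, v, hleg, -⟩; exact absurd hleg.1 (Finset.notMem_empty u)
        · exact fun h => h.elim
      | m + 1, c' + 1, hm =>
        simp only [NDWinAux]
        refine exists_congr fun u => exists_congr fun v => and_congr_right fun hleg => ?_
        have hne : u ≠ v := hleg.2.2.1.ne
        have hsub : ({u, v} : Finset V) ⊆ s := by
          intro x hx
          rcases Finset.mem_insert.mp hx with rfl | hx
          · exact hleg.1
          · rw [Finset.mem_singleton] at hx; subst hx; exact hleg.2.1
        have hcard : (s \ {u, v}).card = c' + 1 - 2 := by
          rw [Finset.card_sdiff_of_subset hsub, Finset.card_pair hne, hs]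
        have h2 : 2 ≤ c' + 1 := by
          have := Finset.card_le_card hsub
          rw [Finset.card_pair hne, hs] at this
          exact this
        have hlt : c' + 1 - 2 < c' + 1 := by omega
        rw [IH _ hlt _ hcard m (c' + 1 - 2 : ℕ) (by omega) (by omega),
          IH _ hlt _ hcard c' (c' + 1 - 2 : ℕ) (by omega) (by omega)]
    intro s hs m k hm hk
    rw [aux s hs m hm, aux s hs k hk]

end Transfer

section PathMoves

/-- Legal moves on the whole path remove an end edge. -/
lemma path_end {m : ℕ} (hm : 3 ≤ m) {u v : Fin m} (huv : u.val + 1 = v.val)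
    (hleg : NDLegal (pathGraph m) Finset.univ u v) :
    u.val = 0 ∨ v.val = m - 1 := by
  by_contra hcon
  push_neg at hcon
  obtain ⟨hu0, hv1⟩ := hcon
  have hu1 : 1 ≤ u.val := Nat.pos_of_ne_zero hu0
  have hvm : v.val < m := v.is_lt
  have hum : u.val < m := u.is_lt
  have hx0 : (⟨0, by omega⟩ : Fin m) ∈ Finset.univ \ {u, v} := by
    simp only [Finset.mem_sdiff, Finset.mem_univ, true_and, Finset.mem_insert,
      Finset.mem_singleton, Fin.ext_iff, Fin.val_mk]
    omega
  have hxm : (⟨m - 1, by omega⟩ : Fin m) ∈ Finset.univ \ {u, v} := by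
    simp only [Finset.mem_sdiff, Finset.mem_univ, true_and, Finset.mem_insert,
      Finset.mem_singleton, Fin.ext_iff, Fin.val_mk]
    omega
  rcases hleg.2.2.2 with he | hconn
  · rw [he] at hx0; exact absurd hx0 (Finset.notMem_empty _)
  · have hreach := hconn.preconnected ⟨_, Finset.mem_coe.mpr hx0⟩ ⟨_, Finset.mem_coe.mpr hxm⟩
    have hP : ∀ a b : ((Finset.univ \ {u, v} : Finset (Fin m)) : Set (Fin m)),
        ((pathGraph m).induce _).Adj a b → (a : Fin m).val < u.val →
          (b : Fin m).val < u.val := by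
      rintro ⟨a, ha⟩ ⟨b, hb⟩ hab hlt
      have h2 : (pathGraph m).Adj a b := hab
      rw [pathGraph_adj] at h2
      have hb' : b ∈ Finset.univ \ {u, v} := Finset.mem_coe.mp hb
      simp only [Finset.mem_sdiff, Finset.mem_univ, true_and, Finset.mem_insert,
        Finset.mem_singleton] at hb'
      have hbu : b.val ≠ u.val := fun he => hb' (Or.inl (Fin.ext he))
      simp only at hlt ⊢
      omega
    have := reach_invariant
      (G := (pathGraph m).induce ((Finset.univ \ {u, v} : Finset (Fin m)) : Set (Fin m)))
      (fun a => (a : Fin m).val < u.val) hP hreach hu1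
    simp only [Fin.val_mk] at this
    omega

/-- Explicit parametrization of the position after removing an end edge of the path. -/
lemma path_g {m : ℕ} (hm : 3 ≤ m) {u v : Fin m} (huv : u.val + 1 = v.val)
    (hend : u.val = 0 ∨ v.val = m - 1) :
    ∃ g : Fin (m - 2) → Fin m,
      (∀ b, g b ∈ Finset.univ \ ({u, v} : Finset (Fin m))) ∧
      Function.Injective g ∧
      (∀ a ∈ Finset.univ \ ({u, v} : Finset (Fin m)), ∃ b, g b = a) ∧
      (∀ b b', (pathGraph (m - 2)).Adj b b' ↔ (pathGraph m).Adj (g b) (g b')) := by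
  have hum : u.val < m := u.is_lt
  have hvm : v.val < m := v.is_lt
  rcases hend with h0 | h1
  · refine ⟨fun b => ⟨b.val + 2, by have := b.is_lt; omega⟩, ?_, ?_, ?_, ?_⟩
    · intro b
      have := b.is_lt
      simp only [Finset.mem_sdiff, Finset.mem_univ, true_and, Finset.mem_insert,
        Finset.mem_singleton, Fin.ext_iff, Fin.val_mk]
      omega
    · intro b b' h
      have h' := congrArg Fin.val h
      simp only [Fin.val_mk] at h'
      exact Fin.ext (by omega)
    · intro a ha
      simp only [Finset.mem_sdiff, Finset.mem_univ, true_and, Finset.mem_insert,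
        Finset.mem_singleton, Fin.ext_iff] at ha
      have hav := a.is_lt
      exact ⟨⟨a.val - 2, by omega⟩, Fin.ext (by simp only [Fin.val_mk]; omega)⟩
    · intro b b'
      have := b.is_lt
      have := b'.is_lt
      simp only [pathGraph_adj, Fin.val_mk]
      omega
  · refine ⟨fun b => ⟨b.val, by have := b.is_lt; omega⟩, ?_, ?_, ?_, ?_⟩
    · intro b
      have := b.is_lt
      simp only [Finset.mem_sdiff, Finset.mem_univ, true_and, Finset.mem_insert,
        Finset.mem_singleton, Fin.ext_iff, Fin.val_mk]
      omega
    · intro b b' h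
      have h' := congrArg Fin.val h
      simp only [Fin.val_mk] at h'
      exact Fin.ext (by omega)
    · intro a ha
      simp only [Finset.mem_sdiff, Finset.mem_univ, true_and, Finset.mem_insert,
        Finset.mem_singleton, Fin.ext_iff] at ha
      have hav := a.is_lt
      exact ⟨⟨a.val, by omega⟩, Fin.ext rfl⟩
    · intro b b'
      have := b.is_lt
      have := b'.is_lt
      simp only [pathGraph_adj, Fin.val_mk]

lemma path_move_data {m : ℕ} (hm : 3 ≤ m) {u v : Fin m}
    (h : NDLegal (pathGraph m) Finset.univ u v) :
    ∃ g : Fin (m - 2) → Fin m,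
      (∀ b, g b ∈ Finset.univ \ ({u, v} : Finset (Fin m))) ∧
      Function.Injective g ∧
      (∀ a ∈ Finset.univ \ ({u, v} : Finset (Fin m)), ∃ b, g b = a) ∧
      (∀ b b', (pathGraph (m - 2)).Adj b b' ↔ (pathGraph m).Adj (g b) (g b')) := by
  have hadj := h.2.2.1
  rw [pathGraph_adj] at hadj
  rcases hadj with huv | hvu
  · exact path_g hm huv (path_end hm huv h)
  · have h' : NDLegal (pathGraph m) Finset.univ v u :=
      ⟨h.2.1, h.1, h.2.2.1.symm, by rw [Finset.pair_comm v u]; exact h.2.2.2⟩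
    rw [Finset.pair_comm u v]
    exact path_g hm hvu (path_end hm hvu h')

lemma fin_mk_sub_val_one {n : ℕ} {x y : ℕ} (hx : x + 2 < n) (hy : y + 2 < n) :
    ((⟨x + 2, hx⟩ : Fin n) - ⟨y + 2, hy⟩).val = 1 ↔ x + 2 = y + 2 + 1 := by
  rw [fin_sub_val_one (Nat.succ_le_succ (Nat.zero_le _)) (Nat.succ_le_succ (Nat.zero_le _)),
    Fin.val_mk, Fin.val_mk]

set_option maxHeartbeats 1000000 in
lemma cycle_g {n : ℕ} (hn : 3 ≤ n) {u v : Fin n} (hv : (v - u).val = 1) :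
    ∃ g : Fin (n - 2) → Fin n,
      (∀ b, g b ∈ Finset.univ \ ({u, v} : Finset (Fin n))) ∧
      Function.Injective g ∧
      (∀ a ∈ Finset.univ \ ({u, v} : Finset (Fin n)), ∃ b, g b = a) ∧
      (∀ b b', (pathGraph (n - 2)).Adj b b' ↔ (cycleGraph n).Adj (g b) (g b')) := by
  haveI : NeZero n := ⟨by omega⟩
  have key : ∀ c : Fin n, (u + c - u).val = c.val := fun c => by
    rw [add_sub_cancel_left]
  refine ⟨fun b => u + ⟨b.val + 2, by have := b.is_lt; omega⟩, ?_, ?_, ?_, ?_⟩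
  · intro b
    have hb := b.is_lt
    simp only [Finset.mem_sdiff, Finset.mem_univ, true_and, Finset.mem_insert,
      Finset.mem_singleton]
    rintro (h | h)
    · have hk := key ⟨b.val + 2, by omega⟩
      rw [h, sub_self, Fin.val_zero, Fin.val_mk] at hk
      omega
    · have hk := key ⟨b.val + 2, by omega⟩
      rw [h, hv, Fin.val_mk] at hk
      omega
  · intro b b' h
    have h2 := add_left_cancel h
    have h3 := congrArg Fin.val h2
    simp only [Fin.val_mk] at h3
    exact Fin.ext (by omega)
  · intro a ha
    simp only [Finset.mem_sdiff, Finset.mem_univ, true_and, Finset.mem_insert,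
      Finset.mem_singleton] at ha
    push_neg at ha
    have hc0 : (a - u).val ≠ 0 := by
      intro h
      apply ha.1
      have h2 : a - u = 0 := Fin.ext (by simp [h])
      exact sub_eq_zero.mp h2
    have hc1 : (a - u).val ≠ 1 := by
      intro h
      apply ha.2
      have h2 : a - u = v - u := Fin.ext (by rw [h, hv])
      exact sub_left_inj.mp h2
    have hcn : (a - u).val < n := (a - u).is_lt
    refine ⟨⟨(a - u).val - 2, by omega⟩, ?_⟩
    dsimp only
    have hval : (a - u).val - 2 + 2 = (a - u).val := by omega
    simp only [hval, Fin.eta]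
    rw [add_comm, sub_add_cancel]
  · intro b b'
    have hb := b.is_lt
    have hb' := b'.is_lt
    dsimp only
    rw [pathGraph_adj, cycleGraph_adj', add_sub_add_left_eq_sub, add_sub_add_left_eq_sub,
      fin_mk_sub_val_one (by omega) (by omega), fin_mk_sub_val_one (by omega) (by omega)]
    omega

lemma cycle_move_data {n : ℕ} (hn : 3 ≤ n) {u v : Fin n}
    (hadj : (cycleGraph n).Adj u v) :
    ∃ g : Fin (n - 2) → Fin n,
      (∀ b, g b ∈ Finset.univ \ ({u, v} : Finset (Fin n))) ∧
      Function.Injective g ∧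
      (∀ a ∈ Finset.univ \ ({u, v} : Finset (Fin n)), ∃ b, g b = a) ∧
      (∀ b b', (pathGraph (n - 2)).Adj b b' ↔ (cycleGraph n).Adj (g b) (g b')) := by
  rw [cycleGraph_adj'] at hadj
  rcases hadj with huv | hvu
  · rw [Finset.pair_comm u v]
    exact cycle_g hn huv
  · exact cycle_g hn hvu

end PathMoves

section Game

lemma NDWinAux_succ (G : SimpleGraph V) (k : ℕ) (s : Finset V) :
    NDWinAux G (k + 1) s ↔ ∃ u v, NDLegal G s u v ∧ ¬ NDWinAux G k (s \ {u, v}) := Iff.rfl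

lemma pathWin_step {m : ℕ} (hm : 3 ≤ m)
    (hIH : NDWinAux (pathGraph (m - 2)) (m - 2) Finset.univ ↔ Odd ((m - 2) / 2)) :
    NDWinAux (pathGraph m) m Finset.univ ↔ Odd (m / 2) := by
  obtain ⟨k, rfl⟩ : ∃ k, m = k + 3 := ⟨m - 3, by omega⟩
  have hm3 : 3 ≤ k + 3 := by omega
  have key : ∀ u v : Fin (k + 3), NDLegal (pathGraph (k + 3)) Finset.univ u v →
      (NDWinAux (pathGraph (k + 3)) (k + 2) (Finset.univ \ {u, v}) ↔
        Odd ((k + 3 - 2) / 2)) := by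
    intro u v hleg
    obtain ⟨g, hmem, hinj, hsurj, hadj⟩ := path_move_data hm3 hleg
    rw [← NDWinAux_transfer (pathGraph (k + 3)) (pathGraph (k + 3 - 2)) (k + 2)
        (Finset.univ \ {u, v}) Finset.univ g (fun b _ => hmem b)
        (fun a _ b _ h => hinj h)
        (fun a ha => (hsurj a ha).imp fun b hb => ⟨Finset.mem_univ b, hb⟩)
        (fun b _ b' _ => hadj b b'),
      NDWinAux_fuel _ (k + 1) Finset.univ (by rw [Finset.card_fin]; omega) (k + 2) (k + 3 - 2)
        (by omega) (by omega)]
    exact hIH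
  have hpar : Odd ((k + 3) / 2) ↔ ¬ Odd ((k + 3 - 2) / 2) := by
    rw [Nat.odd_iff, Nat.odd_iff]; omega
  rw [NDWinAux_succ]
  constructor
  · rintro ⟨u, v, hleg, hW⟩
    exact hpar.mpr fun h => hW ((key u v hleg).mpr h)
  · intro h
    have h01 : ((⟨0, by omega⟩ : Fin (k + 3)).val + 1 = (⟨1, by omega⟩ : Fin (k + 3)).val) := rfl
    obtain ⟨g, hmem, hinj, hsurj, hadj⟩ := path_g hm3 h01 (Or.inl rfl)
    have hconn : ((pathGraph (k + 3)).induce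
        ((Finset.univ \ {(⟨0, by omega⟩ : Fin (k + 3)), ⟨1, by omega⟩} :
          Finset (Fin (k + 3))) : Set (Fin (k + 3)))).Connected := by
      obtain ⟨e⟩ := induceIsoFull (pathGraph (k + 3)) (pathGraph (k + 3 - 2)) _ g
        hmem hinj hsurj hadj
      exact e.connected_iff.mpr (pathGraph_connected k)
    have hleg : NDLegal (pathGraph (k + 3)) Finset.univ ⟨0, by omega⟩ ⟨1, by omega⟩ :=
      ⟨Finset.mem_univ _, Finset.mem_univ _, by rw [pathGraph_adj]; exact Or.inl rfl,
        Or.inr hconn⟩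
    exact ⟨_, _, hleg, fun hW => (hpar.mp h) ((key _ _ hleg).mp hW)⟩

lemma pathWin : ∀ m : ℕ, (NDWinAux (pathGraph m) m Finset.univ ↔ Odd (m / 2)) := by
  intro m
  induction m using Nat.strong_induction_on with
  | _ m IH =>
    rcases lt_or_ge m 3 with hm | hm
    · interval_cases m
      · exact iff_of_false (fun h => h) (by decide)
      · rw [NDWinAux_succ]
        constructor
        · rintro ⟨u, v, hleg, -⟩
          have h := hleg.2.2.1
          rw [pathGraph_adj] at h
          have := u.is_lt
          have := v.is_lt
          omega
        · intro h
          exact absurd h (by decide)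
      · have hemp : (Finset.univ \ {(0 : Fin 2), 1} : Finset (Fin 2)) = ∅ := by decide
        refine iff_of_true ?_ (by decide)
        rw [NDWinAux_succ]
        refine ⟨0, 1, ⟨Finset.mem_univ _, Finset.mem_univ _, ?_, Or.inl hemp⟩, ?_⟩
        · rw [pathGraph_adj]; exact Or.inl rfl
        · rw [hemp, NDWinAux_succ]
          rintro ⟨u, v, hleg, -⟩
          exact Finset.notMem_empty u hleg.1
    · exact pathWin_step hm (IH (m - 2) (by omega))

end Game

/-- On the cycle `C_n` (`n ≥ 3`), every first move of Non-Disconnecting Arc-Kayles leaves a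
graph isomorphic to the path `P_{n-2}`, and the first player wins iff `⌊n/2⌋` is odd. -/
theorem stmt_7 (n : ℕ) (hn : 3 ≤ n) :
    (∀ u v : Fin n, NDLegal (cycleGraph n) Finset.univ u v →
      Nonempty ((cycleGraph n).induce
        ((Finset.univ \ {u, v} : Finset (Fin n)) : Set (Fin n)) ≃g pathGraph (n - 2))) ∧
    (NDFirstWins (cycleGraph n) Finset.univ ↔ Odd (n / 2)) := by
  obtain ⟨k, rfl⟩ : ∃ k, n = k + 3 := ⟨n - 3, by omega⟩
  have hn3 : 3 ≤ k + 3 := by omega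
  haveI : NeZero (k + 3) := ⟨by omega⟩
  constructor
  · intro u v hleg
    obtain ⟨g, hmem, hinj, hsurj, hadj⟩ := cycle_move_data hn3 hleg.2.2.1
    exact induceIsoFull _ _ _ g hmem hinj hsurj hadj
  · have key : ∀ u v : Fin (k + 3), (cycleGraph (k + 3)).Adj u v →
        (NDWinAux (cycleGraph (k + 3)) (k + 2) (Finset.univ \ {u, v}) ↔
          Odd ((k + 3 - 2) / 2)) := by
      intro u v hadjuv
      obtain ⟨g, hmem, hinj, hsurj, hadj⟩ := cycle_move_data hn3 hadjuv
      rw [← NDWinAux_transfer (cycleGraph (k + 3)) (pathGraph (k + 3 - 2)) (k + 2)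
          (Finset.univ \ {u, v}) Finset.univ g (fun b _ => hmem b)
          (fun a _ b _ h => hinj h)
          (fun a ha => (hsurj a ha).imp fun b hb => ⟨Finset.mem_univ b, hb⟩)
          (fun b _ b' _ => hadj b b'),
        NDWinAux_fuel _ (k + 1) Finset.univ (by rw [Finset.card_fin]; omega) (k + 2) (k + 3 - 2)
          (by omega) (by omega)]
      exact pathWin (k + 3 - 2)
    have hpar : Odd ((k + 3) / 2) ↔ ¬ Odd ((k + 3 - 2) / 2) := by
      rw [Nat.odd_iff, Nat.odd_iff]; omega
    unfold NDFirstWins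
    rw [show (Finset.univ : Finset (Fin (k + 3))).card = k + 3 from Finset.card_fin _,
      NDWinAux_succ]
    constructor
    · rintro ⟨u, v, hleg, hW⟩
      exact hpar.mpr fun h => hW ((key u v hleg.2.2.1).mpr h)
    · intro h
      have hadjuv : (cycleGraph (k + 3)).Adj 0 1 := by
        rw [cycleGraph_adj']
        right
        rw [sub_zero]
        exact Fin.val_one (k + 1)
      obtain ⟨g, hmem, hinj, hsurj, hadj⟩ := cycle_move_data hn3 hadjuv
      have hconn : ((cycleGraph (k + 3)).induce
          ((Finset.univ \ {(0 : Fin (k + 3)), 1} :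
            Finset (Fin (k + 3))) : Set (Fin (k + 3)))).Connected := by
        obtain ⟨e⟩ := induceIsoFull (cycleGraph (k + 3)) (pathGraph (k + 3 - 2)) _ g
          hmem hinj hsurj hadj
        exact e.connected_iff.mpr (pathGraph_connected k)
      have hleg : NDLegal (cycleGraph (k + 3)) Finset.univ 0 1 :=
        ⟨Finset.mem_univ _, Finset.mem_univ _, hadjuv, Or.inr hconn⟩
      exact ⟨0, 1, hleg, fun hW => (hpar.mp h) ((key 0 1 hadjuv).mp hW)⟩
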